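/- A spiral S_d(U) = { n^{1/(d+1)}·u_n : n ≥ 1 } is an orchard with visibility function ε ↦ c_U·V(κ_U·ε) for some constants c_U ≥ 1, κ_U > 0 if and only if there exist constants κ, K > 0 such that for all sufficiently small ε > 0 and all v ∈ S^d there is an integer n with 1 ≤ n ≤ K·V(ε)^{d+1} and dist_{S^d}(u_n, v) ≤ κ·ε / n^{1/(d+1)}. -/

import Mathlib

noncomputable section

def gdist {d : ℕ} (u v : EuclideanSpace ℝ (Fin (d+1))) : ℝ :=
  Real.arccos (inner ℝ u v)

def spiral {d : ℕ} (u : ℕ → EuclideanSpace ℝ (Fin (d+1))) :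
    Set (EuclideanSpace ℝ (Fin (d+1))) :=
  {x | ∃ n : ℕ, 1 ≤ n ∧ x = ((n : ℝ) ^ ((1:ℝ)/((d:ℝ)+1))) • u n}

def FiniteDensity {d : ℕ} (S : Set (EuclideanSpace ℝ (Fin (d+1)))) : Prop :=
  ∃ C > (0:ℝ), ∀ T ≥ (1:ℝ),
    ((S ∩ Metric.closedBall 0 T).ncard : ℝ) ≤ C * T ^ (d+1)

def IsOrchard {d : ℕ} (O : Set (EuclideanSpace ℝ (Fin (d+1)))) (V : ℝ → ℝ) : Prop :=
  FiniteDensity O ∧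
    ∀ ε ∈ Set.Ioo (0:ℝ) 1, ∀ v : EuclideanSpace ℝ (Fin (d+1)), ‖v‖ = 1 →
      ∃ o ∈ O, ∃ t : ℝ, 0 < t ∧ t < V ε ∧ ‖o - t • v‖ ≤ ε

open Real

lemma arccos_antitone' : Antitone Real.arccos := fun x y h => by
  simp only [Real.arccos_eq_pi_div_two_sub_arcsin]
  linarith [Real.monotone_arcsin h]

lemma inner_mem' {d : ℕ} {u v : EuclideanSpace ℝ (Fin (d+1))}
    (hu : ‖u‖ = 1) (hv : ‖v‖ = 1) : -1 ≤ (inner ℝ u v : ℝ) ∧ (inner ℝ u v : ℝ) ≤ 1 := by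
  have h := abs_real_inner_le_norm u v
  rw [hu, hv] at h
  constructor <;> [linarith [neg_abs_le (inner ℝ u v : ℝ)]; linarith [le_abs_self (inner ℝ u v : ℝ)]]

lemma norm_sub_sq'' {d : ℕ} {u v : EuclideanSpace ℝ (Fin (d+1))}
    (hu : ‖u‖ = 1) (hv : ‖v‖ = 1) : ‖u - v‖^2 = 2 - 2 * (inner ℝ u v : ℝ) := by
  have := @norm_sub_sq_real (EuclideanSpace ℝ (Fin (d+1))) _ _ u v
  rw [hu, hv] at this; linarith

/-- chord ≤ arc -/
lemma chord_le_gdist {d : ℕ} {u v : EuclideanSpace ℝ (Fin (d+1))}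
    (hu : ‖u‖ = 1) (hv : ‖v‖ = 1) : ‖u - v‖ ≤ gdist u v := by
  set θ := gdist u v with hθ
  have hθ0 : 0 ≤ θ := Real.arccos_nonneg _
  have hθπ : θ ≤ π := Real.arccos_le_pi _
  have hcos : Real.cos θ = (inner ℝ u v : ℝ) :=
    Real.cos_arccos (inner_mem' hu hv).1 (inner_mem' hu hv).2
  have hsq : ‖u - v‖^2 ≤ θ^2 := by
    rw [norm_sub_sq'' hu hv, ← hcos]
    have h1 : Real.cos θ = 2 * Real.cos (θ/2)^2 - 1 := by
      rw [← Real.cos_two_mul]; ring_nf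
    have h2 : Real.sin (θ/2)^2 + Real.cos (θ/2)^2 = 1 := Real.sin_sq_add_cos_sq _
    have h3 : Real.sin (θ/2) ≤ θ/2 := Real.sin_le (by linarith)
    have h4 : 0 ≤ Real.sin (θ/2) := Real.sin_nonneg_of_nonneg_of_le_pi (by linarith) (by linarith)
    nlinarith
  nlinarith [norm_nonneg (u - v)]

/-- arc ≤ (π/2) chord -/
lemma gdist_le_chord {d : ℕ} {u v : EuclideanSpace ℝ (Fin (d+1))}
    (hu : ‖u‖ = 1) (hv : ‖v‖ = 1) : gdist u v ≤ π/2 * ‖u - v‖ := by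
  set s := ‖u - v‖ with hs
  have hs0 : 0 ≤ s := norm_nonneg _
  have hs2 : s ≤ 2 := by
    calc s ≤ ‖u‖ + ‖v‖ := norm_sub_le _ _
    _ = 2 := by rw [hu, hv]; norm_num
  have key : Real.cos (π/2 * s) ≤ (inner ℝ u v : ℝ) := by
    have hiv : (inner ℝ u v : ℝ) = 1 - s^2/2 := by
      have := norm_sub_sq'' hu hv; linarith
    have h1 : Real.cos (π/2 * s) = 1 - 2 * Real.sin (π/4 * s)^2 := by
      have h2 : Real.sin (π/4*s)^2 + Real.cos (π/4*s)^2 = 1 := Real.sin_sq_add_cos_sq _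
      have : Real.cos (2 * (π/4 * s)) = 2 * Real.cos (π/4*s)^2 - 1 := Real.cos_two_mul _
      calc Real.cos (π/2 * s) = Real.cos (2 * (π/4 * s)) := by ring_nf
      _ = 1 - 2 * Real.sin (π/4*s)^2 := by linarith
    have h3 : 2/π * (π/4 * s) ≤ Real.sin (π/4 * s) := by
      apply Real.mul_le_sin
      · positivity
      · nlinarith [Real.pi_pos]
    have hsin0 : 0 ≤ Real.sin (π/4 * s) := le_trans (by positivity) h3
    have h4 : s/2 ≤ Real.sin (π/4 * s) := by
      have heq : 2/π * (π/4*s) = s/2 := by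
        field_simp; ring
      linarith [heq ▸ h3]
    rw [h1, hiv]; nlinarith
  calc gdist u v = Real.arccos (inner ℝ u v : ℝ) := rfl
  _ ≤ Real.arccos (Real.cos (π/2 * s)) := arccos_antitone' key
  _ = π/2 * s := Real.arccos_cos (by positivity) (by nlinarith [Real.pi_pos])

lemma rpow_inv_pow' (d n : ℕ) :
    (((n:ℝ) ^ ((1:ℝ)/((d:ℝ)+1))) : ℝ) ^ (d+1) = (n:ℝ) := by
  rw [← Real.rpow_natCast ((n:ℝ) ^ ((1:ℝ)/((d:ℝ)+1))) (d+1),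
    ← Real.rpow_mul (Nat.cast_nonneg n)]
  have hne : ((d:ℝ)+1) ≠ 0 := by positivity
  have : (1:ℝ)/((d:ℝ)+1) * ((d+1 : ℕ) : ℝ) = 1 := by
    push_cast; field_simp
  rw [this, Real.rpow_one]

lemma one_le_rpow_inv' {d n : ℕ} (hn : 1 ≤ n) :
    1 ≤ ((n:ℝ) ^ ((1:ℝ)/((d:ℝ)+1)) : ℝ) := by
  apply Real.one_le_rpow (by exact_mod_cast hn)
  positivity

lemma spiral_finiteDensity (d : ℕ) (u : ℕ → EuclideanSpace ℝ (Fin (d+1)))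
    (hu : ∀ n, ‖u n‖ = 1) : FiniteDensity (spiral u) := by
  refine ⟨1, one_pos, fun T hT => ?_⟩
  set N := Nat.floor (T^(d+1)) with hN
  have hT0 : (0:ℝ) ≤ T^(d+1) := by positivity
  have hsub : spiral u ∩ Metric.closedBall 0 T ⊆
      (fun n : ℕ => ((n:ℝ) ^ ((1:ℝ)/((d:ℝ)+1))) • u n) '' (Set.Icc 1 N) := by
    rintro x ⟨⟨n, hn1, rfl⟩, hxball⟩
    refine ⟨n, ⟨hn1, ?_⟩, rfl⟩
    have hr0 : (0:ℝ) ≤ (n:ℝ) ^ ((1:ℝ)/((d:ℝ)+1)) :=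
      Real.rpow_nonneg (Nat.cast_nonneg n) _
    have hle : (n:ℝ) ^ ((1:ℝ)/((d:ℝ)+1)) ≤ T := by
      have h := mem_closedBall_zero_iff.mp hxball
      rwa [norm_smul, hu, Real.norm_eq_abs, abs_of_nonneg hr0, mul_one] at h
    have hnT : (n:ℝ) ≤ T^(d+1) := by
      calc (n:ℝ) = ((n:ℝ) ^ ((1:ℝ)/((d:ℝ)+1)))^(d+1) := (rpow_inv_pow' d n).symm
      _ ≤ T^(d+1) := pow_le_pow_left₀ hr0 hle _
    exact Nat.le_floor hnT
  have hfin : (Set.Icc 1 N).Finite := Set.finite_Icc _ _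
  have h1 : (spiral u ∩ Metric.closedBall 0 T).ncard ≤
      ((fun n : ℕ => ((n:ℝ) ^ ((1:ℝ)/((d:ℝ)+1))) • u n) '' (Set.Icc 1 N)).ncard :=
    Set.ncard_le_ncard hsub (hfin.image _)
  have h2 : ((fun n : ℕ => ((n:ℝ) ^ ((1:ℝ)/((d:ℝ)+1))) • u n) '' (Set.Icc 1 N)).ncard ≤
      (Set.Icc 1 N).ncard := Set.ncard_image_le hfin
  have h3 : (Set.Icc (1:ℕ) N).ncard = N := by
    rw [← Finset.coe_Icc, Set.ncard_coe_finset, Nat.card_Icc]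
    omega
  have h4 : ((spiral u ∩ Metric.closedBall 0 T).ncard : ℝ) ≤ (N : ℝ) := by
    exact_mod_cast le_trans h1 (h3 ▸ h2)
  calc ((spiral u ∩ Metric.closedBall 0 T).ncard : ℝ) ≤ (N : ℝ) := h4
  _ ≤ T^(d+1) := Nat.floor_le hT0
  _ = 1 * T^(d+1) := (one_mul _).symm

set_option maxHeartbeats 2000000

/-- Point (1) of the main theorem: a spiral is an orchard with visibility
`ε ↦ c_U · V(κ_U · ε)` iff directions on the sphere are approximated at the
appropriate rate by an initial segment of the sequence. -/
theorem spiral_orchard_iff (d : ℕ) (hd : 1 ≤ d)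
    (u : ℕ → EuclideanSpace ℝ (Fin (d+1))) (hu : ∀ n, ‖u n‖ = 1)
    (V : ℝ → ℝ) (hVpos : ∀ ε ∈ Set.Ioo (0:ℝ) 1, 0 < V ε)
    (hV : AntitoneOn V (Set.Ioo (0:ℝ) 1)) :
    (∃ cU : ℝ, 1 ≤ cU ∧ ∃ κU > (0:ℝ),
        IsOrchard (spiral u) (fun ε => cU * V (κU * ε))) ↔
    (∃ κ > (0:ℝ), ∃ K > (0:ℝ), ∃ ε₀ > (0:ℝ), ∀ ε : ℝ, 0 < ε → ε < ε₀ →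
        ∀ v : EuclideanSpace ℝ (Fin (d+1)), ‖v‖ = 1 →
          ∃ n : ℕ, 1 ≤ n ∧ (n : ℝ) ≤ K * (V ε) ^ (d+1) ∧
            gdist (u n) v ≤ κ * ε / (n : ℝ) ^ ((1:ℝ)/((d:ℝ)+1))) := by
  constructor
  · rintro ⟨cU, hcU, κU, hκU, hFD, hvis⟩
    set m := min κU 1 with hm
    have hm0 : 0 < m := lt_min hκU one_pos
    have hm1 : m ≤ 1 := min_le_right _ _
    have hmκ : m ≤ κU := min_le_left _ _
    set e0 := m^2/(2*κU) with he0
    have he0mem : e0 ∈ Set.Ioo (0:ℝ) 1 := by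
      constructor
      · positivity
      · rw [div_lt_one (by positivity)]; nlinarith
    have hhalf : e0 ≤ m/2 := by
      rw [div_le_div_iff₀ (by positivity) two_pos]; nlinarith
    set V0 := V e0 with hV0def
    have hV0 : 0 < V0 := hVpos _ he0mem
    refine ⟨π/m, by positivity, (cU + 1/V0)^(d+1), by positivity, e0, he0mem.1, ?_⟩
    intro ε hε hεlt v hv
    have hεm : ε < m/2 := lt_of_lt_of_le hεlt hhalf
    have hε1 : ε < 1 := by linarith
    set ε'' := ε/m with hε''def
    have hε''mem : ε'' ∈ Set.Ioo (0:ℝ) 1 := by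
      constructor
      · positivity
      · rw [div_lt_one hm0]; linarith
    obtain ⟨o, ⟨n, hn1, rfl⟩, t, ht0, htV, hclose⟩ := hvis ε'' hε''mem v hv
    set r := (n:ℝ) ^ ((1:ℝ)/((d:ℝ)+1)) with hrdef
    have hr1 : 1 ≤ r := one_le_rpow_inv' hn1
    have hr0 : 0 < r := lt_of_lt_of_le one_pos hr1
    have hκε : κU * ε'' < m/2 := by
      have h1 : κU * ε < m^2/2 := by
        calc κU * ε < κU * e0 := (mul_lt_mul_iff_right₀ hκU).mpr hεlt
        _ = m^2/2 := by rw [he0]; field_simp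
      rw [hε''def, ← mul_div_assoc, div_lt_iff₀ hm0]
      nlinarith
    have hκεmem : κU * ε'' ∈ Set.Ioo (0:ℝ) 1 := by
      constructor
      · positivity
      · linarith
    have hεle : ε ≤ κU * ε'' := by
      rw [hε''def, mul_div_assoc']
      rw [le_div_iff₀ hm0]
      nlinarith
    have hVle : V (κU * ε'') ≤ V ε := hV ⟨hε, hε1⟩ hκεmem hεle
    have hVεV0 : V0 ≤ V ε := hV ⟨hε, hε1⟩ he0mem (le_of_lt hεlt)
    have htVε : t < cU * V ε := by
      calc t < cU * V (κU * ε'') := htV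
      _ ≤ cU * V ε := by nlinarith
    have hnorm_o : ‖r • u n‖ = r := by
      rw [norm_smul, hu, Real.norm_eq_abs, abs_of_pos hr0, mul_one]
    have habs : |r - t| ≤ ε'' := by
      have h1 := abs_norm_sub_norm_le (r • u n) (t • v)
      rw [hnorm_o, norm_smul, hv, Real.norm_eq_abs, abs_of_pos ht0, mul_one] at h1
      exact le_trans h1 hclose
    have hrt : r - t ≤ ε'' := le_trans (le_abs_self _) habs
    have h15 : 1 ≤ 1/V0 * V ε := by
      rw [div_mul_eq_mul_div, one_mul, le_div_iff₀ hV0, one_mul]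
      exact hVεV0
    have hrB : r ≤ (cU + 1/V0) * V ε := by nlinarith [hε''mem.2]
    refine ⟨n, hn1, ?_, ?_⟩
    · calc (n:ℝ) = r^(d+1) := (rpow_inv_pow' d n).symm
      _ ≤ ((cU + 1/V0) * V ε)^(d+1) := pow_le_pow_left₀ (le_of_lt hr0) hrB _
      _ = (cU + 1/V0)^(d+1) * (V ε)^(d+1) := mul_pow _ _ _
    · have hchord2 : r * ‖u n - v‖ ≤ 2 * ε'' := by
        have e2 : ‖t • v - r • v‖ = |t - r| := by
          rw [← sub_smul, norm_smul, hv, mul_one, Real.norm_eq_abs]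
        have htr : |t - r| ≤ ε'' := by rw [abs_sub_comm]; exact habs
        calc r * ‖u n - v‖ = ‖r • (u n - v)‖ := by
              rw [norm_smul, Real.norm_eq_abs, abs_of_pos hr0]
        _ = ‖(r • u n - t • v) + (t • v - r • v)‖ := by rw [smul_sub]; congr 1; abel
        _ ≤ ‖r • u n - t • v‖ + ‖t • v - r • v‖ := norm_add_le _ _
        _ ≤ ε'' + ε'' := add_le_add hclose (e2 ▸ htr)
        _ = 2 * ε'' := by ring
      have hgd : gdist (u n) v ≤ π/2 * ‖u n - v‖ := gdist_le_chord (hu n) hv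
      have h2 : π/2 * ‖u n - v‖ ≤ π/m * ε / r := by
        rw [le_div_iff₀ hr0]
        calc π/2 * ‖u n - v‖ * r = π/2 * (r * ‖u n - v‖) := by ring
        _ ≤ π/2 * (2 * ε'') := by
            apply mul_le_mul_of_nonneg_left hchord2 (by positivity)
        _ = π/m * ε := by rw [hε''def]; field_simp
      exact le_trans hgd h2
  · rintro ⟨κ, hκ, K, hK, ε₀, hε₀, H⟩
    set δ := min (min ε₀ (1/κ)) 1 / 2 with hδdef
    have hδ0 : 0 < δ := by
      apply div_pos _ two_pos
      exact lt_min (lt_min hε₀ (one_div_pos.mpr hκ)) one_pos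
    have hδε₀ : δ < ε₀ := by
      have h1 : min (min ε₀ (1/κ)) 1 ≤ ε₀ := le_trans (min_le_left _ _) (min_le_left _ _)
      rw [hδdef]; linarith
    have hδκ : κ * δ ≤ 1/2 := by
      have h1 : min (min ε₀ (1/κ)) 1 ≤ 1/κ := le_trans (min_le_left _ _) (min_le_right _ _)
      have h2 : δ ≤ (1/κ)/2 := by rw [hδdef]; linarith
      calc κ * δ ≤ κ * ((1/κ)/2) := by nlinarith
      _ = 1/2 := by field_simp
    have hδ1 : δ ≤ 1/2 := by
      have h1 : min (min ε₀ (1/κ)) 1 ≤ 1 := min_le_right _ _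
      rw [hδdef]; linarith
    refine ⟨K + 2, by linarith, δ, hδ0, spiral_finiteDensity d u hu, ?_⟩
    intro ε hε v hv
    set ε' := δ * ε with hε'def
    have hε'0 : 0 < ε' := mul_pos hδ0 hε.1
    have hε'δ : ε' < δ := by
      rw [hε'def]
      exact mul_lt_of_lt_one_right hδ0 hε.2
    have hε'ε₀ : ε' < ε₀ := lt_trans hε'δ hδε₀
    have hε'1 : ε' < 1 := by linarith
    obtain ⟨n, hn1, hnK, hgd⟩ := H ε' hε'0 hε'ε₀ v hv
    set r := (n:ℝ) ^ ((1:ℝ)/((d:ℝ)+1)) with hrdef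
    have hr1 : 1 ≤ r := one_le_rpow_inv' hn1
    have hr0 : 0 < r := lt_of_lt_of_le one_pos hr1
    have hVε' : 0 < V ε' := hVpos ε' ⟨hε'0, hε'1⟩
    refine ⟨r • u n, ⟨n, hn1, rfl⟩, r, hr0, ?_, ?_⟩
    · show r < (K + 2) * V (δ * ε)
      rw [← hε'def]
      have hKp : K ≤ (K+1)^(d+1) := by
        have h : (K+1 : ℝ) ≤ (K+1)^(d+1) :=
          le_self_pow₀ (by linarith : (1:ℝ) ≤ K + 1) (Nat.succ_ne_zero d)
        linarith
      have hpow : r^(d+1) ≤ ((K+1) * V ε')^(d+1) := by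
        calc r^(d+1) = (n:ℝ) := rpow_inv_pow' d n
        _ ≤ K * (V ε')^(d+1) := hnK
        _ ≤ (K+1)^(d+1) * (V ε')^(d+1) := by
            apply mul_le_mul_of_nonneg_right hKp (by positivity)
        _ = ((K+1) * V ε')^(d+1) := (mul_pow _ _ _).symm
      have hrK : r ≤ (K+1) * V ε' :=
        (pow_le_pow_iff_left₀ (le_of_lt hr0) (by positivity : (0:ℝ) ≤ (K+1) * V ε')
          (Nat.succ_ne_zero d)).mp hpow
      nlinarith
    · have hchord : ‖u n - v‖ ≤ κ * ε' / r := le_trans (chord_le_gdist (hu n) hv) hgd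
      calc ‖r • u n - r • v‖ = r * ‖u n - v‖ := by
            rw [← smul_sub, norm_smul, Real.norm_eq_abs, abs_of_pos hr0]
      _ ≤ r * (κ * ε' / r) := by nlinarith
      _ = κ * ε' := by field_simp
      _ = κ * δ * ε := by rw [hε'def]; ring
      _ ≤ ε := by nlinarith
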